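/- Let s : U → ℂ be continuously differentiable on an open set U ⊆ ℂ², with partial derivatives s₁ = ∂₁s, s₂ = ∂₂s. Let V ⊆ ℂ² be open and y : V → ℂ differentiable with s(y(x,u), x) = −u for all (x,u) ∈ V, where (y(x,u), x) ∈ U and (x, y(x,u)) ∈ U, and suppose s₁(y(x,u), x) ≠ 0 on V. Define F : V → ℂ² by F(x,u) = (y(x,u), s(x, y(x,u))). Then F is differentiable and its derivative DF(x,u) is the linear map sending (1,0) to (−s₂(y,x)/s₁(y,x), s₁(x,y) − s₂(x,y)·s₂(y,x)/s₁(y,x)) and sending (0,1) to (−1/s₁(y,x), −s₂(x,y)/s₁(y,x)), where y = y(x,u). Moreover, if in addition s₁(a,b) = s₁(b,a) for all (a,b) with (a,b), (b,a) ∈ U, then det DF(x,u) = 1 for all (x,u) ∈ V, i.e. the twist map F generated by a generating function with symmetric first partial derivative is area-preserving. -/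

import Mathlib

/-- The derivative of the twist map `F(x,u) = (y(x,u), s(x, y(x,u)))` generated by a
generating function `s` (where `s(y(x,u), x) = -u`) is given by the explicit matrix
in terms of the partial derivatives `s₁, s₂` of `s`; moreover, if `s₁` is symmetric,
then `det DF = 1`, i.e. `F` is area-preserving. -/
theorem twist_map_derivative_and_area_preservation
    (U V : Set (ℂ × ℂ)) (hU : IsOpen U) (hV : IsOpen V)
    (s : ℂ × ℂ → ℂ) (hs : ContDiffOn ℂ 1 s U)
    (y : ℂ × ℂ → ℂ) (hy : DifferentiableOn ℂ y V)
    (hmem1 : ∀ p ∈ V, (y p, p.1) ∈ U) (hmem2 : ∀ p ∈ V, (p.1, y p) ∈ U)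
    (heq : ∀ p ∈ V, s (y p, p.1) = -p.2)
    (s₁ s₂ : ℂ × ℂ → ℂ)
    (hs₁ : ∀ q ∈ U, s₁ q = fderiv ℂ s q (1, 0))
    (hs₂ : ∀ q ∈ U, s₂ q = fderiv ℂ s q (0, 1))
    (hnz : ∀ p ∈ V, s₁ (y p, p.1) ≠ 0)
    (F : ℂ × ℂ → ℂ × ℂ) (hF : ∀ p : ℂ × ℂ, F p = (y p, s (p.1, y p))) :
    (∀ p ∈ V, DifferentiableAt ℂ F p ∧
      fderiv ℂ F p (1, 0)
        = (-(s₂ (y p, p.1)) / s₁ (y p, p.1),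
           s₁ (p.1, y p) - s₂ (p.1, y p) * s₂ (y p, p.1) / s₁ (y p, p.1)) ∧
      fderiv ℂ F p (0, 1)
        = (-1 / s₁ (y p, p.1), -(s₂ (p.1, y p)) / s₁ (y p, p.1))) ∧
    ((∀ a b : ℂ, (a, b) ∈ U → (b, a) ∈ U → s₁ (a, b) = s₁ (b, a)) →
      ∀ p ∈ V,
        (fderiv ℂ F p (1, 0)).1 * (fderiv ℂ F p (0, 1)).2
          - (fderiv ℂ F p (1, 0)).2 * (fderiv ℂ F p (0, 1)).1 = 1) := by
  have lin : ∀ (T : ℂ × ℂ →L[ℂ] ℂ) (a b : ℂ), T (a, b) = a * T (1, 0) + b * T (0, 1) := by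
    intro T a b
    have h : (a, b) = a • ((1 : ℂ), (0 : ℂ)) + b • ((0 : ℂ), (1 : ℂ)) := by
      simp [Prod.ext_iff]
    rw [h, map_add, map_smul, map_smul, smul_eq_mul, smul_eq_mul]
  have hFfun : F = fun q : ℂ × ℂ => (y q, s (q.1, y q)) := funext hF
  have main : ∀ p ∈ V, DifferentiableAt ℂ F p ∧
      fderiv ℂ F p (1, 0)
        = (-(s₂ (y p, p.1)) / s₁ (y p, p.1),
           s₁ (p.1, y p) - s₂ (p.1, y p) * s₂ (y p, p.1) / s₁ (y p, p.1)) ∧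
      fderiv ℂ F p (0, 1)
        = (-1 / s₁ (y p, p.1), -(s₂ (p.1, y p)) / s₁ (y p, p.1)) := by
    intro p hp
    have hyd : DifferentiableAt ℂ y p := hy.differentiableAt (hV.mem_nhds hp)
    set L := fderiv ℂ y p with hLdef
    have hyL : HasFDerivAt y L p := hyd.hasFDerivAt
    have hq1 : (y p, p.1) ∈ U := hmem1 p hp
    have hq2 : (p.1, y p) ∈ U := hmem2 p hp
    have hsd : DifferentiableOn ℂ s U := hs.differentiableOn one_ne_zero
    have hsd1 : DifferentiableAt ℂ s (y p, p.1) := hsd.differentiableAt (hU.mem_nhds hq1)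
    have hsd2 : DifferentiableAt ℂ s (p.1, y p) := hsd.differentiableAt (hU.mem_nhds hq2)
    set D1 := fderiv ℂ s (y p, p.1) with hD1def
    set D2 := fderiv ℂ s (p.1, y p) with hD2def
    set A1 := s₁ (y p, p.1) with hA1def
    set B1 := s₂ (y p, p.1) with hB1def
    set A2 := s₁ (p.1, y p) with hA2def
    set B2 := s₂ (p.1, y p) with hB2def
    have hA1 : A1 = D1 (1, 0) := hs₁ _ hq1
    have hB1 : B1 = D1 (0, 1) := hs₂ _ hq1
    have hA2 : A2 = D2 (1, 0) := hs₁ _ hq2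
    have hB2 : B2 = D2 (0, 1) := hs₂ _ hq2
    have hA1ne : A1 ≠ 0 := hnz p hp
    -- the implicit relation and its derivative
    have hinner : HasFDerivAt (fun q : ℂ × ℂ => (y q, q.1))
        (L.prod (ContinuousLinearMap.fst ℂ ℂ ℂ)) p := HasFDerivAt.prodMk hyL (hasFDerivAt_fst)
    have hcomp : HasFDerivAt (fun q : ℂ × ℂ => s (y q, q.1))
        (D1.comp (L.prod (ContinuousLinearMap.fst ℂ ℂ ℂ))) p :=
      hsd1.hasFDerivAt.comp p hinner
    have hEv : (fun q : ℂ × ℂ => -q.2) =ᶠ[nhds p] (fun q : ℂ × ℂ => s (y q, q.1)) :=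
      Filter.eventuallyEq_of_mem (hV.mem_nhds hp) (fun q hq => (heq q hq).symm)
    have hneg : HasFDerivAt (fun q : ℂ × ℂ => s (y q, q.1))
        (-(ContinuousLinearMap.snd ℂ ℂ ℂ)) p :=
      (hasFDerivAt_snd.neg).congr_of_eventuallyEq hEv.symm
    have huniq : D1.comp (L.prod (ContinuousLinearMap.fst ℂ ℂ ℂ))
        = -(ContinuousLinearMap.snd ℂ ℂ ℂ) := hcomp.unique hneg
    have hrel : ∀ v : ℂ × ℂ, D1 (L v, v.1) = -v.2 := by
      intro v
      have := congrArg (fun (T : ℂ × ℂ →L[ℂ] ℂ) => T v) huniq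
      simpa using this
    have hL10 : L (1, 0) = -B1 / A1 := by
      have h := hrel (1, 0)
      have h' : D1 (L (1, 0), 1) = L (1, 0) * A1 + B1 := by
        rw [lin D1 (L (1, 0)) 1, hA1, hB1]; ring
      rw [h'] at h
      field_simp at h ⊢
      linear_combination h
    have hL01 : L (0, 1) = -1 / A1 := by
      have h := hrel (0, 1)
      have h' : D1 (L (0, 1), 0) = L (0, 1) * A1 := by
        rw [lin D1 (L (0, 1)) 0, hA1]; ring
      rw [h'] at h
      field_simp at h ⊢
      linear_combination h
    -- derivative of F
    have hFder : HasFDerivAt F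
        (L.prod (D2.comp ((ContinuousLinearMap.fst ℂ ℂ ℂ).prod L))) p := by
      rw [hFfun]
      exact HasFDerivAt.prodMk hyL (hsd2.hasFDerivAt.comp p (hasFDerivAt_fst.prodMk hyL))
    have hfd := hFder.fderiv
    refine ⟨hFder.differentiableAt, ?_, ?_⟩
    · rw [hfd]
      have e1 : (L.prod (D2.comp ((ContinuousLinearMap.fst ℂ ℂ ℂ).prod L))) ((1 : ℂ), (0 : ℂ))
          = (L (1, 0), D2 (1, L (1, 0))) := rfl
      rw [e1]
      have hcoord : D2 (1, L (1, 0)) = A2 + L (1, 0) * B2 := by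
        rw [lin D2 1 (L (1, 0)), hA2, hB2]; ring
      refine Prod.ext ?_ ?_
      · simpa using hL10
      · simp only
        rw [hcoord, hL10]
        field_simp
        ring
    · rw [hfd]
      have e2 : (L.prod (D2.comp ((ContinuousLinearMap.fst ℂ ℂ ℂ).prod L))) ((0 : ℂ), (1 : ℂ))
          = (L (0, 1), D2 (0, L (0, 1))) := rfl
      rw [e2]
      have hcoord : D2 (0, L (0, 1)) = L (0, 1) * B2 := by
        rw [lin D2 0 (L (0, 1)), hB2]; ring
      refine Prod.ext ?_ ?_
      · simpa using hL01
      · simp only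
        rw [hcoord, hL01]
        field_simp
  refine ⟨main, ?_⟩
  intro hsym p hp
  obtain ⟨-, h1, h2⟩ := main p hp
  have hA1ne : s₁ (y p, p.1) ≠ 0 := hnz p hp
  have hsymm : s₁ (p.1, y p) = s₁ (y p, p.1) := hsym p.1 (y p) (hmem2 p hp) (hmem1 p hp)
  rw [h1, h2]
  simp only [Prod.fst, Prod.snd]
  rw [hsymm]
  field_simp
  ring
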